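/- In the cube (S_n □ S_m)^3, the induced subgraph on the vertices (w_i, v_j) with i, j ≠ 0 (both coordinates non-central) is isomorphic to the rook graph K_n □ K_m, and every vertex outside this subgraph is adjacent to all other vertices of (S_n □ S_m)^3. -/

import Mathlib

open SimpleGraph

/-- The star graph with a central vertex `0` and `n` leaves. -/
def starGraph (n : ℕ) : SimpleGraph (Fin (n+1)) where
  Adj u v := u ≠ v ∧ (u = 0 ∨ v = 0)
  symm := by
    constructor
    intro u v h
    exact ⟨h.1.symm, h.2.symm⟩
  loopless := by
    constructor
    intro u h
    exact h.1 rfl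

/-- A proper coloring with `k` colors which is a b-coloring: every color class
contains a vertex adjacent to at least one vertex of every other color class. -/
def IsBColoring {V : Type*} (G : SimpleGraph V) (k : ℕ) (c : V → Fin k) : Prop :=
  (∀ u v, G.Adj u v → c u ≠ c v) ∧
    ∀ i : Fin k, ∃ v, c v = i ∧ ∀ j : Fin k, j ≠ i → ∃ u, G.Adj v u ∧ c u = j

/-- `G` admits a b-coloring with `k` colors. -/
def HasBColoring {V : Type*} (G : SimpleGraph V) (k : ℕ) : Prop :=
  ∃ c : V → Fin k, IsBColoring G k c

/-- The set of `k` such that `G` has a b-coloring with `k` colors.  The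
b-chromatic number of `G` is the greatest element of this set. -/
def bChromaticSet {V : Type*} (G : SimpleGraph V) : Set ℕ :=
  {k | HasBColoring G k}

/-- The set of `i` such that `G` has at least `i` vertices of degree at least `i - 1`.
The m-degree of `G` is the greatest element of this set. -/
def mDegreeSet {V : Type*} (G : SimpleGraph V) : Set ℕ :=
  {i | ∃ S : Set V, S.Finite ∧ S.ncard = i ∧ ∀ v ∈ S, i - 1 ≤ (G.neighborSet v).ncard}

/-- The line graph of `G`: vertices are the edges of `G`, two being adjacent iff
they are distinct and share an endpoint. -/
def lineGraph {V : Type*} (G : SimpleGraph V) : SimpleGraph G.edgeSet where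
  Adj e f := e ≠ f ∧ ∃ v, v ∈ (e : Sym2 V) ∧ v ∈ (f : Sym2 V)
  symm := by
    constructor
    rintro e f ⟨hne, v, hv1, hv2⟩
    exact ⟨hne.symm, v, hv2, hv1⟩
  loopless := by
    constructor
    rintro e ⟨hne, -⟩
    exact hne rfl

/-- The total graph of `G`: vertices are `V(G) ⊕ E(G)`; adjacency is vertex
adjacency, vertex-edge incidence, or edge adjacency. -/
def totalGraph {V : Type*} (G : SimpleGraph V) : SimpleGraph (V ⊕ G.edgeSet) where
  Adj x y :=
    match x, y with
    | .inl u, .inl v => G.Adj u v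
    | .inl u, .inr e => u ∈ (e : Sym2 V)
    | .inr e, .inl u => u ∈ (e : Sym2 V)
    | .inr e, .inr f => e ≠ f ∧ ∃ v, v ∈ (e : Sym2 V) ∧ v ∈ (f : Sym2 V)
  symm := by
    constructor
    rintro (u | e) (v | f) h
    · exact h.symm
    · exact h
    · exact h
    · exact ⟨h.1.symm, h.2.choose, h.2.choose_spec.2, h.2.choose_spec.1⟩
  loopless := by
    constructor
    rintro (u | e) h
    · exact G.loopless.irrefl u h
    · exact h.1 rfl

/-- The `p`-th power of `G`: same vertices, `u ~ v` iff `0 < d(u,v) ≤ p`. -/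
def graphPower {V : Type*} (G : SimpleGraph V) (p : ℕ) : SimpleGraph V where
  Adj u v := 0 < G.dist u v ∧ G.dist u v ≤ p
  symm := by
    constructor
    intro u v h
    rwa [SimpleGraph.dist_comm]
  loopless := by
    constructor
    intro u h
    simp [SimpleGraph.dist_self] at h

lemma star_connected (n : ℕ) : (_root_.starGraph n).Connected := by
  rw [connected_iff]
  refine ⟨fun u v => ?_, ⟨0⟩⟩
  have h : ∀ w : Fin (n+1), (_root_.starGraph n).Reachable w 0 := by
    intro w
    by_cases hw : w = 0
    · subst hw; exact Reachable.refl _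
    · exact Adj.reachable ⟨hw, Or.inr rfl⟩
  exact (h u).trans (h v).symm

lemma star_dist_le_two (n : ℕ) (u v : Fin (n+1)) : (_root_.starGraph n).dist u v ≤ 2 := by
  by_cases h : u = v
  · simp [h, SimpleGraph.dist_self]
  by_cases hu : u = 0
  · have := SimpleGraph.dist_eq_one_iff_adj.mpr (show (_root_.starGraph n).Adj u v from ⟨h, Or.inl hu⟩)
    omega
  by_cases hv : v = 0
  · have := SimpleGraph.dist_eq_one_iff_adj.mpr (show (_root_.starGraph n).Adj u v from ⟨h, Or.inr hv⟩)
    omega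
  · refine le_trans (SimpleGraph.dist_le
      (Walk.cons (show (_root_.starGraph n).Adj u 0 from ⟨hu, Or.inr rfl⟩)
        (Walk.cons (show (_root_.starGraph n).Adj 0 v from ⟨Ne.symm hv, Or.inl rfl⟩) Walk.nil))) ?_
    simp

lemma star_dist_eq_two (n : ℕ) (u v : Fin (n+1)) (h : u ≠ v) (hu : u ≠ 0) (hv : v ≠ 0) :
    (_root_.starGraph n).dist u v = 2 := by
  have h1 : (_root_.starGraph n).dist u v ≠ 1 := by
    rw [ne_eq, SimpleGraph.dist_eq_one_iff_adj]
    rintro ⟨-, h0 | h0⟩ <;> [exact hu h0; exact hv h0]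
  have h0 : 0 < (_root_.starGraph n).dist u v := (star_connected n).pos_dist_of_ne h
  have := star_dist_le_two n u v
  omega

lemma le_boxProd_walk {α β : Type*} {G : SimpleGraph α} {H : SimpleGraph β}
    (hG : G.Connected) (hH : H.Connected) {x y : α × β} (p : (G.boxProd H).Walk x y) :
    G.dist x.1 y.1 + H.dist x.2 y.2 ≤ p.length := by
  induction p with
  | nil => simp
  | @cons a b c hadj q ih =>
    rcases hadj with ⟨h1, h2⟩ | ⟨h1, h2⟩
    · have t := hG.dist_triangle (u := a.1) (v := b.1) (w := c.1)
      rw [SimpleGraph.dist_eq_one_iff_adj.mpr h1] at t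
      change _ ≤ q.length + 1
      rw [h2]
      omega
    · have t := hH.dist_triangle (u := a.2) (v := b.2) (w := c.2)
      rw [SimpleGraph.dist_eq_one_iff_adj.mpr h1] at t
      change _ ≤ q.length + 1
      rw [h2]
      omega

lemma boxProd_dist_le {α β : Type*} {G : SimpleGraph α} {H : SimpleGraph β}
    (hG : G.Connected) (hH : H.Connected) (x y : α × β) :
    (G.boxProd H).dist x y ≤ G.dist x.1 y.1 + H.dist x.2 y.2 := by
  obtain ⟨x1, x2⟩ := x
  obtain ⟨y1, y2⟩ := y
  obtain ⟨p, hp⟩ := hG.exists_walk_length_eq_dist x1 y1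
  obtain ⟨q, hq⟩ := hH.exists_walk_length_eq_dist x2 y2
  refine le_trans (SimpleGraph.dist_le ((p.boxProdLeft H x2).append (q.boxProdRight G y1))) ?_
  rw [Walk.length_append, Walk.boxProdLeft, Walk.boxProdRight]
  exact (Nat.add_le_add (Walk.length_map _ p).le (Walk.length_map _ q).le).trans (by rw [hp, hq])

lemma boxProd_dist {α β : Type*} {G : SimpleGraph α} {H : SimpleGraph β}
    (hG : G.Connected) (hH : H.Connected) (x y : α × β) :
    (G.boxProd H).dist x y = G.dist x.1 y.1 + H.dist x.2 y.2 := by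
  refine le_antisymm (boxProd_dist_le hG hH x y) ?_
  obtain ⟨p, hp⟩ := (hG.boxProd hH).exists_walk_length_eq_dist x y
  rw [← hp]
  exact le_boxProd_walk hG hH p

lemma star_dist_zero_le_one (n : ℕ) (v : Fin (n+1)) : (_root_.starGraph n).dist 0 v ≤ 1 := by
  by_cases h : v = 0
  · simp [h, SimpleGraph.dist_self]
  · exact le_of_eq (SimpleGraph.dist_eq_one_iff_adj.mpr ⟨Ne.symm h, Or.inl rfl⟩)

lemma graphPower_adj {V : Type*} (G : SimpleGraph V) (p : ℕ) (u v : V) :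
    (graphPower G p).Adj u v ↔ 0 < G.dist u v ∧ G.dist u v ≤ p := Iff.rfl

theorem cube_induced_rook (n m : ℕ) :
    Nonempty
      (((graphPower ((_root_.starGraph n).boxProd (_root_.starGraph m)) 3).induce
          {x : Fin (n+1) × Fin (m+1) | x.1 ≠ 0 ∧ x.2 ≠ 0}) ≃g
        ((⊤ : SimpleGraph (Fin n)).boxProd (⊤ : SimpleGraph (Fin m)))) ∧
    ∀ x : Fin (n+1) × Fin (m+1), (x.1 = 0 ∨ x.2 = 0) →
      ∀ y, y ≠ x → (graphPower ((_root_.starGraph n).boxProd (_root_.starGraph m)) 3).Adj x y := by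
  have hG := star_connected n
  have hH := star_connected m
  have hbox := hG.boxProd hH
  have hdist := boxProd_dist hG hH
  constructor
  · refine ⟨⟨⟨fun x => (x.1.1.pred x.2.1, x.1.2.pred x.2.2),
      fun p => ⟨(p.1.succ, p.2.succ), Fin.succ_ne_zero _, Fin.succ_ne_zero _⟩, ?_, ?_⟩, ?_⟩⟩
    · intro x
      apply Subtype.ext
      apply Prod.ext <;> simp [Fin.succ_pred]
    · intro p
      apply Prod.ext <;> simp [Fin.pred_succ]
    · rintro ⟨⟨a1, a2⟩, ha1, ha2⟩ ⟨⟨b1, b2⟩, hb1, hb2⟩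
      show ((⊤ : SimpleGraph (Fin n)).boxProd ⊤).Adj _ _ ↔
        (graphPower ((_root_.starGraph n).boxProd (_root_.starGraph m)) 3).Adj (a1, a2) (b1, b2)
      rw [graphPower_adj, hdist, boxProd_adj]
      by_cases h1 : a1 = b1 <;> by_cases h2 : a2 = b2
      · subst h1; subst h2; simp [SimpleGraph.dist_self]
      · subst h1
        rw [SimpleGraph.dist_self, star_dist_eq_two m a2 b2 h2 ha2 hb2]
        simp [Fin.pred_inj, h2]
      · subst h2
        rw [SimpleGraph.dist_self, star_dist_eq_two n a1 b1 h1 ha1 hb1]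
        simp [Fin.pred_inj, h1]
      · rw [star_dist_eq_two m a2 b2 h2 ha2 hb2, star_dist_eq_two n a1 b1 h1 ha1 hb1]
        simp [Fin.pred_inj, h1, h2]
  · intro x hx y hy
    refine ⟨hbox.pos_dist_of_ne (Ne.symm hy), ?_⟩
    rw [hdist]
    rcases hx with hx | hx
    · have h1 : (_root_.starGraph n).dist x.1 y.1 ≤ 1 := hx ▸ star_dist_zero_le_one n y.1
      have h2 := star_dist_le_two m x.2 y.2
      omega
    · have h1 := star_dist_le_two n x.1 y.1
      have h2 : (_root_.starGraph m).dist x.2 y.2 ≤ 1 := hx ▸ star_dist_zero_le_one m y.2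
      omega
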